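/- (Liu–Park four-point inequality with double internal nodes, second-derivative bound) Let 0 ≤ x ≤ 1 and let f : [-1,1] → ℝ be twice differentiable with |f''(t)| ≤ M for all t ∈ [-1,1]. Then |∫_{-1}^1 f(t) dt - (1/2)[f(-1) + f(-x) + f(x) + f(1)] + (x/2)[f'(x) - f'(-x)]| ≤ (1/6)(1 - 3x² + 4x³) M. In particular, the bound function x ↦ (1/6)(1 - 3x² + 4x³) attains its minimum on [0,1] at x = 1/2 with value 1/8. -/

import Mathlib

open MeasureTheory intervalIntegral Set


lemma lp_f''_int (M : ℝ) (f' f'' : ℝ → ℝ)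
    (hf' : ∀ t ∈ Set.Icc (-1:ℝ) 1, HasDerivWithinAt f' (f'' t) (Set.Icc (-1) 1) t)
    (hbound : ∀ t ∈ Set.Icc (-1:ℝ) 1, |f'' t| ≤ M) :
    IntervalIntegrable f'' MeasureTheory.volume (-1) 1 := by
  rw [intervalIntegrable_iff_integrableOn_Ioc_of_le (by norm_num)]
  have hres : volume.restrict (Ioc (-1:ℝ) 1) = volume.restrict (Ioo (-1:ℝ) 1) :=
    (Measure.restrict_congr_set Ioo_ae_eq_Ioc).symm
  have heq : ∀ t ∈ Ioo (-1:ℝ) 1, f'' t = deriv f' t := by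
    intro t ht
    exact (((hf' t (Ioo_subset_Icc_self ht)).hasDerivAt
      (Icc_mem_nhds ht.1 ht.2)).deriv).symm
  have hae : f'' =ᵐ[volume.restrict (Ioc (-1:ℝ) 1)] deriv f' := by
    rw [hres, Filter.EventuallyEq, ae_restrict_iff' measurableSet_Ioo]
    exact ae_of_all _ heq
  have hmeas : AEStronglyMeasurable f'' (volume.restrict (Ioc (-1:ℝ) 1)) :=
    (measurable_deriv f').aestronglyMeasurable.congr hae.symm
  refine Integrable.mono' (integrable_const M) hmeas ?_
  rw [ae_restrict_iff' measurableSet_Ioc]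
  refine ae_of_all _ fun t ht => ?_
  rw [Real.norm_eq_abs]
  exact hbound t (Ioc_subset_Icc_self ht)

lemma lp_piece (f f' f'' : ℝ → ℝ)
    (hf : ∀ t ∈ Set.Icc (-1:ℝ) 1, HasDerivWithinAt f (f' t) (Set.Icc (-1) 1) t)
    (hf' : ∀ t ∈ Set.Icc (-1:ℝ) 1, HasDerivWithinAt f' (f'' t) (Set.Icc (-1) 1) t)
    (hint : IntervalIntegrable f'' MeasureTheory.volume (-1) 1)
    (c a b : ℝ) (hab : a ≤ b) (ha : -1 ≤ a) (hb : b ≤ 1) :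
    ∫ t in a..b, ((t^2/2 + c*t) * f'' t - f t)
      = ((b^2/2 + c*b) * f' b - (b + c) * f b)
        - ((a^2/2 + c*a) * f' a - (a + c) * f a) := by
  have hsub : Set.Icc a b ⊆ Set.Icc (-1:ℝ) 1 := Icc_subset_Icc ha hb
  have hsubu : Set.uIcc a b ⊆ Set.uIcc (-1:ℝ) 1 := by
    rw [Set.uIcc_of_le hab, Set.uIcc_of_le (by norm_num : (-1:ℝ) ≤ 1)]; exact hsub
  have hfc : ContinuousOn f (Set.Icc (-1:ℝ) 1) := fun t ht => (hf t ht).continuousWithinAt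
  have hf'c : ContinuousOn f' (Set.Icc (-1:ℝ) 1) := fun t ht => (hf' t ht).continuousWithinAt
  apply integral_eq_sub_of_hasDeriv_right_of_le hab
  · -- continuity of g
    apply ContinuousOn.sub
    · exact ((continuous_pow 2).continuousOn.div_const 2 |>.add
        (continuousOn_const.mul continuousOn_id)).mul (hf'c.mono hsub)
    · exact ((continuousOn_id.add continuousOn_const)).mul (hfc.mono hsub)
  · intro t ht
    have ht' : t ∈ Set.Ioo (-1:ℝ) 1 := ⟨lt_of_le_of_lt ha ht.1, lt_of_lt_of_le ht.2 hb⟩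
    have hmem : Set.Icc (-1:ℝ) 1 ∈ nhds t := Icc_mem_nhds ht'.1 ht'.2
    have hft : HasDerivAt f (f' t) t := (hf t (Set.Ioo_subset_Icc_self ht')).hasDerivAt hmem
    have hf't : HasDerivAt f' (f'' t) t := (hf' t (Set.Ioo_subset_Icc_self ht')).hasDerivAt hmem
    have hq : HasDerivAt (fun s : ℝ => s^2/2 + c*s) (t + c) t := by
      have := (((hasDerivAt_pow 2 t).div_const 2).add ((hasDerivAt_id t).const_mul c))
      exact this.congr_deriv (by push_cast; ring)
    have hl : HasDerivAt (fun s : ℝ => s + c) 1 t := (hasDerivAt_id t).add_const c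
    have hg := (hq.mul hf't).sub (hl.mul hft)
    have : (t + c) * f' t + (t ^ 2 / 2 + c * t) * f'' t - (1 * f t + (t + c) * f' t)
        = (t^2/2 + c*t) * f'' t - f t := by ring
    rw [this] at hg
    exact hg.hasDerivWithinAt
  · -- integrability
    apply IntervalIntegrable.sub
    · exact (hint.mono_set hsubu).continuousOn_mul
        (((continuous_pow 2).continuousOn.div_const 2).add
          (continuousOn_const.mul continuousOn_id))
    · exact (hfc.mono (by rwa [Set.uIcc_of_le hab])).intervalIntegrable

lemma lp_bd (M : ℝ) (f'' : ℝ → ℝ)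
    (hint : IntervalIntegrable f'' MeasureTheory.volume (-1) 1)
    (hbound : ∀ t ∈ Set.Icc (-1:ℝ) 1, |f'' t| ≤ M)
    (c a b σ : ℝ) (hab : a ≤ b) (ha : -1 ≤ a) (hb : b ≤ 1)
    (hσ : ∀ t ∈ Set.Icc a b, |t^2/2 + c*t| = σ * (t^2/2 + c*t)) :
    |∫ t in a..b, (t^2/2 + c*t) * f'' t|
      ≤ M * (σ * (b^3/6 + c*b^2/2) - σ * (a^3/6 + c*a^2/2)) := by
  have hsub : Set.Icc a b ⊆ Set.Icc (-1:ℝ) 1 := Icc_subset_Icc ha hb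
  have hsubu : Set.uIcc a b ⊆ Set.uIcc (-1:ℝ) 1 := by
    rw [Set.uIcc_of_le hab, Set.uIcc_of_le (by norm_num : (-1:ℝ) ≤ 1)]; exact hsub
  have hqc : ContinuousOn (fun t : ℝ => t^2/2 + c*t) (Set.uIcc a b) :=
    ((continuous_pow 2).continuousOn.div_const 2).add (continuousOn_const.mul continuousOn_id)
  have hqint : IntervalIntegrable (fun t => (t^2/2 + c*t) * f'' t) volume a b :=
    (hint.mono_set hsubu).continuousOn_mul hqc
  have h1 : |∫ t in a..b, (t^2/2 + c*t) * f'' t|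
      ≤ ∫ t in a..b, |(t^2/2 + c*t) * f'' t| := abs_integral_le_integral_abs hab
  have h2 : (∫ t in a..b, |(t^2/2 + c*t) * f'' t|)
      ≤ ∫ t in a..b, M * (σ * (t^2/2 + c*t)) := by
    apply integral_mono_on hab hqint.abs
    · apply ContinuousOn.intervalIntegrable
      exact continuousOn_const.mul (continuousOn_const.mul hqc)
    · intro t ht
      rw [abs_mul, ← hσ t ht]
      calc |t^2/2 + c*t| * |f'' t| ≤ |t^2/2 + c*t| * M :=
            mul_le_mul_of_nonneg_left (hbound t (hsub ht)) (abs_nonneg _)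
        _ = M * |t^2/2 + c*t| := mul_comm _ _
  have h3 : (∫ t in a..b, M * (σ * (t^2/2 + c*t)))
      = M * (σ * (b^3/6 + c*b^2/2) - σ * (a^3/6 + c*a^2/2)) := by
    have hD : ∀ t ∈ Set.uIcc a b,
        HasDerivAt (fun s : ℝ => M * (σ * (s^3/6 + c*(s^2/2)))) (M * (σ * (t^2/2 + c*t))) t := by
      intro t _
      have h := ((((hasDerivAt_pow 3 t).div_const 6).add
        (((hasDerivAt_pow 2 t).div_const 2).const_mul c)).const_mul σ).const_mul M
      have he : M * (σ * (((3:ℕ):ℝ) * t ^ (3-1) / 6 + c * (((2:ℕ):ℝ) * t ^ (2-1) / 2)))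
          = M * (σ * (t^2/2 + c*t)) := by push_cast; ring
      rw [he] at h
      exact h
    rw [integral_eq_sub_of_hasDerivAt hD]
    · ring
    · apply ContinuousOn.intervalIntegrable
      exact continuousOn_const.mul (continuousOn_const.mul hqc)
  linarith

set_option maxHeartbeats 1000000 in
theorem liu_park_four_point (M x : ℝ) (hx : x ∈ Set.Icc (0:ℝ) 1)
    (f f' f'' : ℝ → ℝ)
    (hf : ∀ t ∈ Set.Icc (-1:ℝ) 1, HasDerivWithinAt f (f' t) (Set.Icc (-1) 1) t)
    (hf' : ∀ t ∈ Set.Icc (-1:ℝ) 1, HasDerivWithinAt f' (f'' t) (Set.Icc (-1) 1) t)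
    (hbound : ∀ t ∈ Set.Icc (-1:ℝ) 1, |f'' t| ≤ M) :
    |(∫ t in (-1:ℝ)..1, f t) - (1 / 2) * (f (-1) + f (-x) + f x + f 1) +
        (x / 2) * (f' x - f' (-x))| ≤ (1 / 6) * (1 - 3 * x ^ 2 + 4 * x ^ 3) * M ∧
    (∀ y ∈ Set.Icc (0:ℝ) 1, (1:ℝ) / 8 ≤ (1 / 6) * (1 - 3 * y ^ 2 + 4 * y ^ 3)) ∧
    (1 / 6) * (1 - 3 * ((1:ℝ) / 2) ^ 2 + 4 * ((1:ℝ) / 2) ^ 3) = 1 / 8 := by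
  obtain ⟨hx0, hx1⟩ := hx
  refine ⟨?_, fun y hy => by nlinarith [sq_nonneg (2*y - 1), hy.1], by norm_num⟩
  have hmx : (-1:ℝ) ≤ -x := by linarith
  have hxx : -x ≤ x := by linarith
  have hx1' : (-x:ℝ) ≤ 1 := by linarith
  have hint := lp_f''_int M f' f'' hf' hbound
  have hfc : ContinuousOn f (Set.Icc (-1:ℝ) 1) := fun t ht => (hf t ht).continuousWithinAt
  -- integrability of f on pieces
  have hfi : ∀ a b : ℝ, a ≤ b → -1 ≤ a → b ≤ 1 → IntervalIntegrable f volume a b := by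
    intro a b hab ha hb
    exact (hfc.mono (by rw [Set.uIcc_of_le hab]; exact Icc_subset_Icc ha hb)).intervalIntegrable
  -- integrability of q*f'' on pieces
  have hqi : ∀ c a b : ℝ, a ≤ b → -1 ≤ a → b ≤ 1 →
      IntervalIntegrable (fun t => (t^2/2 + c*t) * f'' t) volume a b := by
    intro c a b hab ha hb
    refine (hint.mono_set ?_).continuousOn_mul
      (((continuous_pow 2).continuousOn.div_const 2).add (continuousOn_const.mul continuousOn_id))
    rw [Set.uIcc_of_le hab, Set.uIcc_of_le (by norm_num : (-1:ℝ) ≤ 1)]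
    exact Icc_subset_Icc ha hb
  -- piece identities
  have P1 := lp_piece f f' f'' hf hf' hint (1/2) (-1) (-x) hmx le_rfl hx1'
  have P2 := lp_piece f f' f'' hf hf' hint 0 (-x) x hxx hmx hx1
  have P3 := lp_piece f f' f'' hf hf' hint (-(1/2)) x 1 hx1 (by linarith) le_rfl
  have S1 := integral_sub (hqi (1/2) (-1) (-x) hmx le_rfl hx1') (hfi (-1) (-x) hmx le_rfl hx1')
  have S2 := integral_sub (hqi 0 (-x) x hxx hmx hx1) (hfi (-x) x hxx hmx hx1)
  have S3 := integral_sub (hqi (-(1/2)) x 1 hx1 (by linarith) le_rfl)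
    (hfi x 1 hx1 (by linarith) le_rfl)
  rw [S1] at P1; rw [S2] at P2; rw [S3] at P3
  -- splitting the integral
  have hsplit1 : (∫ t in (-1:ℝ)..(-x), f t) + (∫ t in (-x:ℝ)..x, f t) = ∫ t in (-1:ℝ)..x, f t :=
    integral_add_adjacent_intervals (hfi (-1) (-x) hmx le_rfl hx1') (hfi (-x) x hxx hmx hx1)
  have hsplit2 : (∫ t in (-1:ℝ)..x, f t) + (∫ t in (x:ℝ)..1, f t) = ∫ t in (-1:ℝ)..1, f t :=
    integral_add_adjacent_intervals
      ((hfi (-1) (-x) hmx le_rfl hx1').trans (hfi (-x) x hxx hmx hx1))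
      (hfi x 1 hx1 (by linarith) le_rfl)
  set I1 := ∫ t in (-1:ℝ)..(-x), (t^2/2 + (1/2)*t) * f'' t with hI1
  set I2 := ∫ t in (-x:ℝ)..x, (t^2/2 + 0*t) * f'' t with hI2
  set I3 := ∫ t in (x:ℝ)..1, (t^2/2 + (-(1/2))*t) * f'' t with hI3
  have hE : (∫ t in (-1:ℝ)..1, f t) - (1 / 2) * (f (-1) + f (-x) + f x + f 1) +
      (x / 2) * (f' x - f' (-x)) = I1 + I2 + I3 := by
    have h1 : (∫ t in (-1:ℝ)..(-x), f t) = I1 -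
        ((((-x)^2/2 + (1/2)*(-x)) * f' (-x) - ((-x) + (1/2)) * f (-x))
          - (((-1:ℝ)^2/2 + (1/2)*(-1)) * f' (-1) - ((-1:ℝ) + (1/2)) * f (-1))) := by
      linarith [P1]
    have h2 : (∫ t in (-x:ℝ)..x, f t) = I2 -
        (((x^2/2 + 0*x) * f' x - (x + 0) * f x)
          - (((-x)^2/2 + 0*(-x)) * f' (-x) - ((-x) + 0) * f (-x))) := by
      linarith [P2]
    have h3 : (∫ t in (x:ℝ)..1, f t) = I3 -
        ((((1:ℝ)^2/2 + (-(1/2))*1) * f' 1 - ((1:ℝ) + (-(1/2))) * f 1)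
          - ((x^2/2 + (-(1/2))*x) * f' x - (x + (-(1/2))) * f x)) := by
      linarith [P3]
    rw [← hsplit2, ← hsplit1, h1, h2, h3]
    ring
  rw [hE]
  have B1 := lp_bd M f'' hint hbound (1/2) (-1) (-x) (-1) hmx le_rfl hx1'
    (fun t ht => by
      rw [abs_of_nonpos (by nlinarith [ht.1, ht.2] : t^2/2 + (1/2)*t ≤ 0)]; ring)
  have B2 := lp_bd M f'' hint hbound 0 (-x) x 1 hxx hmx hx1
    (fun t ht => by
      rw [abs_of_nonneg (by nlinarith [sq_nonneg t] : (0:ℝ) ≤ t^2/2 + 0*t)]; ring)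
  have B3 := lp_bd M f'' hint hbound (-(1/2)) x 1 (-1) hx1 (by linarith) le_rfl
    (fun t ht => by
      rw [abs_of_nonpos (by nlinarith [ht.1, ht.2] : t^2/2 + (-(1/2))*t ≤ 0)]; ring)
  rw [← hI1] at B1; rw [← hI2] at B2; rw [← hI3] at B3
  calc |I1 + I2 + I3| ≤ |I1| + |I2| + |I3| :=
        (abs_add_le _ _).trans (add_le_add_left (abs_add_le _ _) _)
    _ ≤ M * ((-1) * ((-x)^3/6 + (1/2)*(-x)^2/2) - (-1) * ((-1:ℝ)^3/6 + (1/2)*(-1:ℝ)^2/2))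
        + M * (1 * (x^3/6 + 0*x^2/2) - 1 * ((-x)^3/6 + 0*(-x)^2/2))
        + M * ((-1) * ((1:ℝ)^3/6 + (-(1/2))*(1:ℝ)^2/2) - (-1) * (x^3/6 + (-(1/2))*x^2/2)) :=
        add_le_add (add_le_add B1 B2) B3
    _ = (1 / 6) * (1 - 3 * x ^ 2 + 4 * x ^ 3) * M := by ring
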